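/- Let ℓ be a Laurent polynomial in d variables with positive integer coefficients whose Newton polytope does not contain the origin. Then the infimum of ℓ over the open positive orthant is 0: for every ε > 0 there exists p ∈ (ℝ_{>0})^d with ℓ(p) < ε. -/

import Mathlib

/-- If the Newton polytope of a Laurent polynomial with positive integer
coefficients does not contain the origin, then the infimum of its values over
the open positive orthant is `0`: for every `ε > 0` there is a point of the
open positive orthant where the value is `< ε`. -/
theorem laurent_inf_zero_of_newton_polytope_not_mem_zero
    (d : ℕ) (c : (Fin d → ℤ) →₀ ℤ) (hc : c ≠ 0)
    (hpos : ∀ m ∈ c.support, 1 ≤ c m)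
    (hnp : (0 : Fin d → ℝ) ∉
      convexHull ℝ ((fun m : Fin d → ℤ => fun i => (m i : ℝ)) ''
        (c.support : Set (Fin d → ℤ)))) :
    ∀ ε : ℝ, 0 < ε → ∃ p : Fin d → ℝ, (∀ i, 0 < p i) ∧
      ∑ m ∈ c.support, (c m : ℝ) * ∏ i, p i ^ (m i) < ε := by
  intro ε hε
  set M : (Fin d → ℤ) → (Fin d → ℝ) := fun m => fun i => (m i : ℝ) with hM
  have hfin : (M '' (c.support : Set (Fin d → ℤ))).Finite :=
    (c.support.finite_toSet).image _
  obtain ⟨f, u, hfu, hsep⟩ :=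
    geometric_hahn_banach_point_closed (convex_convexHull ℝ _)
      (hfin.isClosed_convexHull ℝ) hnp
  have hu : 0 < u := by simpa using hfu
  have hsupne : c.support.Nonempty := Finsupp.support_nonempty_iff.2 hc
  have hfm : ∀ m ∈ c.support, u < f (M m) := fun m hm =>
    hsep _ (subset_convexHull ℝ _ ⟨m, hm, rfl⟩)
  -- C : sum of coefficients
  set C : ℝ := ∑ m ∈ c.support, (c m : ℝ) with hC
  have hCpos : 0 < C := by
    apply Finset.sum_pos (fun m hm => by exact_mod_cast lt_of_lt_of_le one_pos (hpos m hm)) hsupne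
  set s : ℝ := max 1 (Real.log (C / ε) / u + 1) with hs
  have hs1 : (1 : ℝ) ≤ s := le_max_left _ _
  have hspos : 0 < s := lt_of_lt_of_le one_pos hs1
  have hsu : Real.log (C / ε) < s * u := by
    have h1 : Real.log (C / ε) / u < s := lt_of_lt_of_le (lt_add_one _) (le_max_right _ _)
    calc Real.log (C / ε) = Real.log (C / ε) / u * u := by field_simp
    _ < s * u := by exact mul_lt_mul_of_pos_right h1 hu
  have hexp : Real.exp (-(s * u)) < ε / C := by
    have : Real.exp (-(s * u)) < Real.exp (Real.log (ε / C)) := by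
      apply Real.exp_lt_exp.2
      rw [show ε / C = (C / ε)⁻¹ by field_simp, Real.log_inv]
      linarith
    rwa [Real.exp_log (div_pos hε hCpos)] at this
  refine ⟨fun i => Real.exp (-(s * f (Pi.single i 1))), fun i => Real.exp_pos _, ?_⟩
  have key : ∀ m ∈ c.support,
      (∏ i, Real.exp (-(s * f (Pi.single i 1))) ^ (m i)) = Real.exp (-(s * f (M m))) := by
    intro m hm
    have h1 : ∀ i : Fin d, Real.exp (-(s * f (Pi.single i 1))) ^ (m i)
        = Real.exp ((m i : ℝ) * (-(s * f (Pi.single i 1)))) := by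
      intro i
      rw [← Real.rpow_intCast, Real.rpow_def_of_pos (Real.exp_pos _), Real.log_exp, mul_comm]
    rw [Finset.prod_congr rfl fun i _ => h1 i, ← Real.exp_sum]
    congr 1
    have hMm : M m = ∑ i, (m i : ℝ) • (Pi.single i (1 : ℝ) : Fin d → ℝ) := by
      funext j
      simp [Pi.single_apply, M, Finset.sum_apply, mul_comm]
    rw [hMm, map_sum]
    simp only [map_smul, smul_eq_mul]
    rw [Finset.mul_sum, ← Finset.sum_neg_distrib]
    apply Finset.sum_congr rfl
    intro i _
    ring
  calc ∑ m ∈ c.support, (c m : ℝ) * ∏ i, Real.exp (-(s * f (Pi.single i 1))) ^ (m i)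
      = ∑ m ∈ c.support, (c m : ℝ) * Real.exp (-(s * f (M m))) :=
        Finset.sum_congr rfl fun m hm => by rw [key m hm]
    _ < ∑ m ∈ c.support, (c m : ℝ) * Real.exp (-(s * u)) := by
        apply Finset.sum_lt_sum_of_nonempty hsupne
        intro m hm
        have hcm : (0 : ℝ) < (c m : ℝ) := by exact_mod_cast lt_of_lt_of_le one_pos (hpos m hm)
        apply mul_lt_mul_of_pos_left _ hcm
        apply Real.exp_lt_exp.2
        have := hfm m hm
        nlinarith
    _ = C * Real.exp (-(s * u)) := by rw [← Finset.sum_mul]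
    _ < C * (ε / C) := mul_lt_mul_of_pos_left hexp hCpos
    _ = ε := by field_simp
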